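/- Let A, B, C be finite types with decidable equality, and let 𝓜 : Matrix A A ℂ →ₗ[ℂ] Matrix B B ℂ and 𝓝 : Matrix B B ℂ →ₗ[ℂ] Matrix C C ℂ be linear maps. Then the Choi matrix of the sequential composition 𝓝 ∘ₗ 𝓜 is the link product of the Choi matrices: for all c, c' : C and a, a' : A, C(𝓝 ∘ₗ 𝓜) (c, a) (c', a') = ∑ b b', C(𝓝) (c, b) (c', b') * C(𝓜) (b, a) (b', a'). -/

import Mathlib

open Matrix Kronecker BigOperators

/-- The Choi matrix of a linear map on matrices. -/
noncomputable def choiMatrix {A B : Type*} [Fintype A] [DecidableEq A]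
    (E : Matrix A A ℂ →ₗ[ℂ] Matrix B B ℂ) : Matrix (B × A) (B × A) ℂ :=
  Matrix.of fun p q => E (Matrix.single p.2 q.2 1) p.1 q.1

theorem stmt4 {A B C : Type*} [Fintype A] [Fintype B] [Fintype C]
    [DecidableEq A] [DecidableEq B] [DecidableEq C]
    (M : Matrix A A ℂ →ₗ[ℂ] Matrix B B ℂ) (N : Matrix B B ℂ →ₗ[ℂ] Matrix C C ℂ) :
    ∀ (c c' : C) (a a' : A),
      choiMatrix (N ∘ₗ M) (c, a) (c', a') =
        ∑ b, ∑ b', choiMatrix N (c, b) (c', b') * choiMatrix M (b, a) (b', a') := by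
  intro c c' a a'
  simp only [choiMatrix, LinearMap.comp_apply, Matrix.of_apply]
  conv_lhs => rw [matrix_eq_sum_single (M (Matrix.single a a' 1))]
  rw [map_sum]
  simp only [Matrix.sum_apply, map_sum]
  refine Finset.sum_congr rfl fun b _ => Finset.sum_congr rfl fun b' _ => ?_
  have h : Matrix.single b b' (M (Matrix.single a a' 1) b b')
      = (M (Matrix.single a a' 1) b b') • Matrix.single b b' 1 := by
    ext i j
    simp [Matrix.single, Matrix.smul_apply]
  rw [h, _root_.map_smul, Matrix.smul_apply, smul_eq_mul, mul_comm]
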